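/- arXiv:2307.11857 — 4 statements merged into one kernel-verified Lean document; each statement's English description precedes it below -/
import Mathlib

section
/- Let g : {0,1}^n → ℝ^n be monotone increasing and u ∈ ℝ̄^n. With e_u^i(x) = E(u[i:=x]) as above, the function e_u^i is constant on the region where its i-th coordinate equals 0: for any x', x'' ∈ ℝ̄ with (e_u^i(x'))_i = 0 and (e_u^i(x''))_i = 0, we have e_u^i(x') = e_u^i(x''). -/
open Function

/-- Best-response map: `G_u(y) i = 𝟙(g(y)_i ≥ u_i)`, comparisons in the extended reals. -/
noncomputable def Gmap {n : ℕ} (g : (Fin n → Bool) → Fin n → ℝ) (u : Fin n → EReal)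
    (y : Fin n → Bool) : Fin n → Bool :=
  fun i => decide (u i ≤ ((g y i : ℝ) : EReal))

/-- Minimal equilibrium: `E(u) = (G_u)^[n](0)`. -/
noncomputable def Emin {n : ℕ} (g : (Fin n → Bool) → Fin n → ℝ) (u : Fin n → EReal) : Fin n → Bool :=
  (Gmap g u)^[n] (fun _ => false)

lemma Gmap_mono {n : ℕ} (g : (Fin n → Bool) → Fin n → ℝ) (hg : Monotone g)
    (u : Fin n → EReal) : Monotone (Gmap g u) := by
  intro y y' h j
  simp only [Gmap]
  have himp : u j ≤ ((g y j : ℝ) : EReal) → u j ≤ ((g y' j : ℝ) : EReal) :=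
    fun h1 => h1.trans (EReal.coe_le_coe_iff.mpr (hg h j))
  exact Bool.le_iff_imp.mpr fun ht => decide_eq_true (himp (of_decide_eq_true ht))

lemma iter_mono {n : ℕ} (g : (Fin n → Bool) → Fin n → ℝ) (hg : Monotone g)
    (u : Fin n → EReal) : Monotone (fun k => (Gmap g u)^[k] (fun _ => false)) := by
  apply monotone_nat_of_le_succ
  intro k
  rw [Function.iterate_succ_apply]
  exact (Gmap_mono g hg u).iterate k (fun j => Bool.false_le _)

lemma Emin_eq_top {n : ℕ} (g : (Fin n → Bool) → Fin n → ℝ) (hg : Monotone g)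
    (u : Fin n → EReal) (i : Fin n) (x : EReal)
    (h : Emin g (Function.update u i x) i = false) :
    Emin g (Function.update u i x) = Emin g (Function.update u i ⊤) := by
  set u' := Function.update u i x with hu'
  set ut := Function.update u i ⊤ with hut
  have key : ∀ k, k ≤ n →
      (Gmap g u')^[k] (fun _ => false) = (Gmap g ut)^[k] (fun _ => false) := by
    intro k hk
    induction k with
    | zero => rfl
    | succ m ih =>
      have hm : m ≤ n := Nat.le_of_succ_le hk
      rw [Function.iterate_succ_apply', Function.iterate_succ_apply', ← ih hm]
      funext j
      by_cases hj : j = i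
      · subst hj
        have hle : (Gmap g u')^[m+1] (fun _ => false) j ≤ Emin g u' j :=
          iter_mono g hg u' hk j
        rw [h] at hle
        have h1 : (Gmap g u')^[m+1] (fun _ => false) j = false :=
          le_antisymm hle (Bool.false_le _)
        rw [Function.iterate_succ_apply'] at h1
        rw [h1]
        simp only [Gmap, hut, Function.update_self]
        symm
        exact decide_eq_false (by simp [top_le_iff])
      · simp only [Gmap]
        rw [hu', hut, Function.update_of_ne hj, Function.update_of_ne hj]
  exact key n le_rfl

/-- `e_u^i` is constant on the region where its `i`-th coordinate is `0`. -/
theorem Emin_update_constant_on_zero_region {n : ℕ} (g : (Fin n → Bool) → Fin n → ℝ)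
    (hg : Monotone g) (u : Fin n → EReal) (i : Fin n) (x' x'' : EReal)
    (h' : Emin g (Function.update u i x') i = false)
    (h'' : Emin g (Function.update u i x'') i = false) :
    Emin g (Function.update u i x') = Emin g (Function.update u i x'') := by
  rw [Emin_eq_top g hg u i x' h', Emin_eq_top g hg u i x'' h'']
end

section
/- Let g : {0,1}^n → ℝ^n be monotone increasing and u ∈ ℝ̄^n. With e_u^i(x) = E(u[i:=x]), the function e_u^i is constant on the region where its i-th coordinate equals 1: for any x', x'' with (e_u^i(x'))_i = 1 = (e_u^i(x''))_i, we have e_u^i(x') = e_u^i(x''). -/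
open Function

namespace EminAux

variable {n : ℕ}

lemma gmap_mono (g : (Fin n → Bool) → Fin n → ℝ) (hg : Monotone g) (u : Fin n → EReal) :
    Monotone (Gmap g u) := by
  intro y z hyz j
  simp only [Gmap, Bool.le_iff_imp, decide_eq_true_iff]
  intro h
  exact h.trans (by exact_mod_cast hg hyz j)

lemma gmap_anti (g : (Fin n → Bool) → Fin n → ℝ) {u v : Fin n → EReal} (huv : u ≤ v)
    (y : Fin n → Bool) : Gmap g v y ≤ Gmap g u y := by
  intro j
  simp only [Gmap, Bool.le_iff_imp, decide_eq_true_iff]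
  intro h
  exact (huv j).trans h

lemma iterate_fixed (f : (Fin n → Bool) → (Fin n → Bool)) (hf : Monotone f) :
    f (f^[n] (fun _ => false)) = f^[n] (fun _ => false) := by
  set c : ℕ → Fin n → Bool := fun k => f^[k] (fun _ => false) with hc
  have hmono : ∀ k, c k ≤ c (k + 1) := by
    intro k
    induction k with
    | zero => intro j; simp [c, Bool.false_le]
    | succ k ih =>
        have : c (k+1) = f (c k) := by simp [c, Function.iterate_succ_apply']
        have h2 : c (k+2) = f (c (k+1)) := by simp [c, Function.iterate_succ_apply']
        rw [this, h2]; exact hf ih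
  have hstab : ∃ m ≤ n, c m = c (m + 1) := by
    by_contra hcon
    push_neg at hcon
    set s : ℕ → ℕ := fun k => (Finset.univ.filter fun j => c k j = true).card with hs
    have hlt : ∀ m ≤ n, s m < s (m + 1) := by
      intro m hm
      apply Finset.card_lt_card
      constructor
      · intro j hj
        simp only [Finset.mem_filter, Finset.mem_univ, true_and] at hj ⊢
        exact Bool.le_iff_imp.mp (hmono m j) hj
      · intro hsub
        apply hcon m hm
        funext j
        have h1 := hmono m j
        by_cases hcj : c m j = true
        · rw [hcj, (Bool.le_iff_imp.mp h1 hcj)]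
        · by_cases hcj2 : c (m+1) j = true
          · exfalso
            have := hsub (Finset.mem_filter.mpr ⟨Finset.mem_univ j, hcj2⟩)
            simp only [Finset.mem_filter, Finset.mem_univ, true_and] at this
            exact hcj this
          · rw [Bool.eq_false_iff.mpr hcj, Bool.eq_false_iff.mpr hcj2]
    have hge : ∀ m ≤ n + 1, m ≤ s m := by
      intro m hm
      induction m with
      | zero => exact Nat.zero_le _
      | succ m ih =>
          have := hlt m (Nat.lt_succ_iff.mp hm)
          exact Nat.succ_le_of_lt (lt_of_le_of_lt (ih (Nat.le_of_succ_le hm)) this)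
    have h1 : n + 1 ≤ s (n + 1) := hge (n+1) le_rfl
    have h2 : s (n + 1) ≤ n := by
      calc s (n+1) ≤ Finset.univ.card := Finset.card_filter_le _ _
        _ = n := Finset.card_fin n
    omega
  obtain ⟨m, hm, heq⟩ := hstab
  have hconst : ∀ k, c (m + k) = c m := by
    intro k
    induction k with
    | zero => rfl
    | succ k ih =>
        have h1 : c (m + k + 1) = f (c (m + k)) := by simp [c, Function.iterate_succ_apply']
        have h2 : c (m + 1) = f (c m) := by simp [c, Function.iterate_succ_apply']
        rw [show m + (k+1) = m + k + 1 from rfl, h1, ih, ← h2, heq]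
  have hn : c n = c m := by
    have := hconst (n - m)
    rwa [Nat.add_sub_cancel' hm] at this
  have hn1 : c (n + 1) = c m := by
    have := hconst (n + 1 - m)
    rwa [Nat.add_sub_cancel' (hm.trans (Nat.le_succ n))] at this
  have hstep : c (n+1) = f (c n) := by simp [c, Function.iterate_succ_apply']
  show f (c n) = c n
  rw [← hstep, hn, hn1]

end EminAux

theorem key {n : ℕ} (g : (Fin n → Bool) → Fin n → ℝ)
    (hg : Monotone g) (u : Fin n → EReal) (i : Fin n) {x' x'' : EReal} (hle : x' ≤ x'')
    (h'' : Emin g (Function.update u i x'') i = true) :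
    Emin g (Function.update u i x') = Emin g (Function.update u i x'') := by
  set v' := Function.update u i x'
  set v'' := Function.update u i x''
  have hv : v' ≤ v'' := by
    intro j
    by_cases hj : j = i
    · subst hj; simp [v', v'']; exact hle
    · simp [v', v'', Function.update_apply, hj]
  set E'' := Emin g v'' with hE''
  -- E'' is a fixed point of Gmap g v''
  have hfix : Gmap g v'' E'' = E'' := EminAux.iterate_fixed _ (EminAux.gmap_mono g hg v'')
  -- direction 1 : Emin v'' ≤ Emin v'
  have hdir1 : Emin g v'' ≤ Emin g v' := by
    have : ∀ k, (Gmap g v'')^[k] (fun _ => false) ≤ (Gmap g v')^[k] (fun _ => false) := by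
      intro k
      induction k with
      | zero => exact le_rfl
      | succ k ih =>
          rw [Function.iterate_succ_apply', Function.iterate_succ_apply']
          exact le_trans (EminAux.gmap_mono g hg v'' ih) (EminAux.gmap_anti g hv _)
    exact this n
  -- direction 2 : Emin v' ≤ E''
  have hdir2 : Emin g v' ≤ E'' := by
    have : ∀ k, (Gmap g v')^[k] (fun _ => false) ≤ E'' := by
      intro k
      induction k with
      | zero => intro j; simp [Bool.false_le]
      | succ k ih =>
          rw [Function.iterate_succ_apply']
          intro j
          have step : Gmap g v' ((Gmap g v')^[k] (fun _ => false)) j ≤ Gmap g v' E'' j :=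
            EminAux.gmap_mono g hg v' ih j
          refine step.trans ?_
          by_cases hj : j = i
          · subst hj; rw [h'']; exact Bool.le_true _
          · have : Gmap g v' E'' j = Gmap g v'' E'' j := by
              simp [Gmap, v', v'', Function.update_apply, hj]
            rw [this, hfix]
    exact this n
  exact le_antisymm hdir2 hdir1

/-- `e_u^i` is constant on the region where its `i`-th coordinate is `1`. -/
theorem Emin_update_constant_on_one_region {n : ℕ} (g : (Fin n → Bool) → Fin n → ℝ)
    (hg : Monotone g) (u : Fin n → EReal) (i : Fin n) (x' x'' : EReal)
    (h' : Emin g (Function.update u i x') i = true)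
    (h'' : Emin g (Function.update u i x'') i = true) :
    Emin g (Function.update u i x') = Emin g (Function.update u i x'') := by
  rcases le_total x' x'' with h | h
  · exact key g hg u i h h''
  · exact (key g hg u i h h').symm
end

section
/- Let g : {0,1}^n → ℝ^n be monotone increasing and let u ∈ ℝ̄^n with minimal equilibrium y = E(u). For every coordinate k with y_k = 1, the shock satisfies u_k ≤ g(E(u[k:=+∞]))_k, i.e., the shock lies weakly below the threshold t_k = T_k(u). -/
open Function

lemma gmap_mono {n : ℕ} (g : (Fin n → Bool) → Fin n → ℝ) (u : Fin n → EReal)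
    (hg : Monotone g) : Monotone (Gmap g u) := by
  intro x y hxy i
  simp only [Gmap]
  have hgy : ((g x i : ℝ) : EReal) ≤ ((g y i : ℝ) : EReal) :=
    EReal.coe_le_coe_iff.mpr (hg hxy i)
  by_cases h : u i ≤ ((g x i : ℝ) : EReal)
  · simp [h, le_trans h hgy]
  · simp [h]

lemma card_lt_of_lt {n : ℕ} {x y : Fin n → Bool} (hxy : x ≤ y) (hne : x ≠ y) :
    (Finset.univ.filter fun i => x i = true).card <
      (Finset.univ.filter fun i => y i = true).card := by
  apply Finset.card_lt_card
  constructor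
  · intro i hi
    simp only [Finset.mem_filter, Finset.mem_univ, true_and] at *
    exact Bool.le_iff_imp.mp (hxy i) hi
  · intro hsub
    apply hne
    funext i
    have h1 := hxy i
    by_cases hx : x i = true
    · rw [hx, Bool.le_iff_imp.mp h1 hx]
    · by_cases hyi : y i = true
      · have : i ∈ Finset.univ.filter fun j => x j = true :=
          hsub (by simp [hyi])
        simp only [Finset.mem_filter] at this
        exact absurd this.2 hx
      · rw [Bool.not_eq_true] at hx hyi; rw [hx, hyi]

lemma iterate_bot_fixed {n : ℕ} (f : (Fin n → Bool) → Fin n → Bool) (hf : Monotone f) :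
    f (f^[n] (fun _ => false)) = f^[n] (fun _ => false) := by
  set a : ℕ → (Fin n → Bool) := fun m => f^[m] (fun _ => false) with ha
  have hstep : ∀ m, a m ≤ a (m + 1) := by
    intro m
    induction m with
    | zero => intro i; exact Bool.false_le _
    | succ m ih =>
        have : a (m + 1) = f (a m) := by simp [ha, Function.iterate_succ_apply']
        have h2 : a (m + 2) = f (a (m + 1)) := by simp [ha, Function.iterate_succ_apply']
        rw [this, h2]; exact hf ih
  have hfind : ∃ m ≤ n, a m = a (m + 1) := by
    by_contra hcon
    push_neg at hcon
    have hcard : ∀ m ≤ n + 1, m ≤ (Finset.univ.filter fun i => a m i = true).card := by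
      intro m hm
      induction m with
      | zero => exact Nat.zero_le _
      | succ m ih =>
          have hm' : m ≤ n := Nat.lt_succ_iff.mp hm
          have h1 := card_lt_of_lt (hstep m) (hcon m hm')
          have h2 := ih (Nat.le_of_succ_le hm)
          omega
    have h1 := hcard (n + 1) le_rfl
    have h2 : (Finset.univ.filter fun i => a (n + 1) i = true).card ≤ n := by
      calc (Finset.univ.filter fun i => a (n + 1) i = true).card
          ≤ (Finset.univ : Finset (Fin n)).card := Finset.card_filter_le _ _
        _ = n := by simp
    omega
  obtain ⟨m, hm, hfix⟩ := hfind
  have hconst : ∀ j, a (m + j) = a m := by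
    intro j
    induction j with
    | zero => rfl
    | succ j ih =>
        have : a (m + j + 1) = f (a (m + j)) := by simp [ha, Function.iterate_succ_apply']
        have h2 : a (m + 1) = f (a m) := by simp [ha, Function.iterate_succ_apply']
        rw [show m + (j + 1) = m + j + 1 by ring, this, ih, ← h2, hfix]
  have han : a n = a m := by
    have := hconst (n - m)
    rwa [Nat.add_sub_cancel' hm] at this
  have h2 : a (m + 1) = f (a m) := by simp [ha, Function.iterate_succ_apply']
  have key : f (a n) = a n := by rw [han, ← h2, ← hfix]
  exact key

/-- If `y = E(u)` is the minimal equilibrium and `y_k = 1`, then the shock `u_k` lies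
weakly below the threshold `t_k = g(E(u[k:=+∞]))_k`. -/
theorem shock_le_threshold_of_action {n : ℕ} (g : (Fin n → Bool) → Fin n → ℝ)
    (hg : Monotone g) (u : Fin n → EReal) (y : Fin n → Bool) (hy : Emin g u = y)
    (k : Fin n) (hk : y k = true) :
    u k ≤ ((g (Emin g (Function.update u k ⊤)) k : ℝ) : EReal) := by
  set u' := Function.update u k ⊤ with hu'
  set z := Emin g u' with hz
  have hzfix : Gmap g u' z = z := iterate_bot_fixed _ (gmap_mono g u' hg)
  have hzk : z k = false := by
    have h := congrFun hzfix k
    rw [← h]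
    have : ¬ (u' k ≤ ((g z k : ℝ) : EReal)) := by
      rw [hu', Function.update_self]
      simp [top_le_iff]
    simp [Gmap, this]
  by_contra hle
  have hlt : ((g z k : ℝ) : EReal) < u k := not_le.mp hle
  have hfix : Gmap g u z = z := by
    funext i
    by_cases hik : i = k
    · subst hik
      simp [Gmap, hzk, not_le.mpr hlt]
    · have h := congrFun hzfix i
      rw [← h]
      simp [Gmap, hu', Function.update_of_ne hik]
  have hyz : y ≤ z := by
    rw [← hy]
    have h1 : (fun _ : Fin n => false) ≤ z := fun i => Bool.false_le _
    have h2 : (Gmap g u)^[n] (fun _ => false) ≤ (Gmap g u)^[n] z :=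
      (gmap_mono g u hg).iterate n h1
    rwa [Function.iterate_fixed hfix n] at h2
  have h := hyz k
  rw [hk, hzk] at h
  exact absurd h (by simp [Bool.le_iff_imp])
end

section
/- Let g : {0,1}^n → ℝ^n be monotone increasing, u ∈ ℝ̄^n, and suppose E(u) = y with y_k = 0 and u_k = +∞. Let x ∈ ℝ̄ with x > g(y)_k. Then E(u[k:=x]) = y. -/
open Function

/-- Induction step (non-acting coordinate): if `E(u) = y`, `y_k = 0` and `u_k = +∞`,
then replacing `u_k` by any `x` strictly above `g(y)_k` preserves the minimal
equilibrium. -/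
theorem Emin_update_above_utility {n : ℕ} (g : (Fin n → Bool) → Fin n → ℝ)
    (hg : Monotone g) (u : Fin n → EReal) (y : Fin n → Bool) (hy : Emin g u = y)
    (k : Fin n) (hk : y k = false) (huk : u k = ⊤) (x : EReal)
    (hx : ((g y k : ℝ) : EReal) < x) :
    Emin g (Function.update u k x) = y := by
  have hGmono : ∀ v : Fin n → EReal, Monotone (Gmap g v) := by
    intro v y₁ y₂ h i
    simp only [Gmap]
    have hle : (g y₁ i : ℝ) ≤ g y₂ i := hg h i
    by_cases hv : v i ≤ ((g y₁ i : ℝ) : EReal)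
    · have hv2 : v i ≤ ((g y₂ i : ℝ) : EReal) := hv.trans (by exact_mod_cast hle)
      simp [hv, hv2]
    · simp [hv]
  set u' := Function.update u k x with hu'
  have hchain : Monotone (fun j => (Gmap g u)^[j] (fun _ => false)) := by
    apply monotone_nat_of_le_succ
    intro j
    induction j with
    | zero => intro i; simp
    | succ j ih =>
      rw [Function.iterate_succ_apply', Function.iterate_succ_apply']
      exact hGmono u ih
  have hley : ∀ j, j ≤ n → (Gmap g u)^[j] (fun _ => false) ≤ y := by
    intro j hj
    rw [← hy]
    exact hchain hj
  have hagree : ∀ z, z ≤ y → Gmap g u' z = Gmap g u z := by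
    intro z hz
    funext i
    by_cases hik : i = k
    · subst hik
      have h1 : (g z i : ℝ) ≤ g y i := hg hz i
      have h2 : ¬ (x ≤ ((g z i : ℝ) : EReal)) := by
        intro h
        exact absurd (h.trans (by exact_mod_cast h1)) (not_le.mpr hx)
      have h3 : ¬ (u i ≤ ((g z i : ℝ) : EReal)) := by
        rw [huk]; simp
      simp [Gmap, hu', Function.update_self, h2, h3]
    · simp [Gmap, hu', Function.update_of_ne hik]
  have key : ∀ j, j ≤ n →
      (Gmap g u')^[j] (fun _ => false) = (Gmap g u)^[j] (fun _ => false) := by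
    intro j hj
    induction j with
    | zero => rfl
    | succ j ih =>
      rw [Function.iterate_succ_apply', Function.iterate_succ_apply',
        ih (Nat.le_of_succ_le hj), hagree _ (hley j (Nat.le_of_succ_le hj))]
  show (Gmap g u')^[n] (fun _ => false) = y
  rw [key n le_rfl]
  exact hy
end
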